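/- arXiv:1708.04471 — 3 statements merged into one kernel-verified Lean document; each statement's English description precedes it below -/
import Mathlib

section
/- Let G be a finite connected simple graph on a finite vertex set V with positive real edge lengths δ, and let d : V → ℤ. Then the set of functions m : V × V → ℤ such that (i) m is antisymmetric (m(v,w) = −m(w,v)), (ii) m(v,w) = 0 whenever v and w are not adjacent, (iii) for every vertex v, ∑_{w adjacent to v} m(v,w) = d(v), and (iv) there exists f : V → ℝ with f(w) − f(v) = m(v,w)·δ(v,w) for all adjacent v, w, is a finite set. -/
/-- On a finite connected simple graph with positive symmetric edge lengths `δ` and a fixed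
divisor `d : V → ℤ`, the set of antisymmetric integer slope assignments `m : V × V → ℤ`,
supported on edges, whose sum of outgoing slopes at each vertex is `d v`, and which are
realized by an actual potential `f : V → ℝ` (i.e. `f w - f v = m v w * δ v w` along edges),
is finite. -/
theorem slopes_with_fixed_divisor_finite
    {V : Type*} [Fintype V] [DecidableEq V]
    (G : SimpleGraph V) [DecidableRel G.Adj] (hconn : G.Connected)
    (δ : V → V → ℝ)
    (hsymm : ∀ v w, G.Adj v w → δ v w = δ w v)
    (hpos : ∀ v w, G.Adj v w → 0 < δ v w)
    (d : V → ℤ) :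
    {m : V → V → ℤ |
        (∀ v w, m v w = - m w v) ∧
        (∀ v w, ¬ G.Adj v w → m v w = 0) ∧
        (∀ v : V, ∑ w ∈ G.neighborFinset v, m v w = d v) ∧
        (∃ f : V → ℝ, ∀ v w, G.Adj v w → f w - f v = (m v w : ℝ) * δ v w)}.Finite := by
  classical
  set B : ℤ := ∑ v, |d v| with hBdef
  have hB0 : (0:ℤ) ≤ B := Finset.sum_nonneg fun v _ => abs_nonneg _
  -- key: every slope is bounded above by B
  have key : ∀ m ∈ {m : V → V → ℤ |
        (∀ v w, m v w = - m w v) ∧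
        (∀ v w, ¬ G.Adj v w → m v w = 0) ∧
        (∀ v : V, ∑ w ∈ G.neighborFinset v, m v w = d v) ∧
        (∃ f : V → ℝ, ∀ v w, G.Adj v w → f w - f v = (m v w : ℝ) * δ v w)},
      ∀ v w, m v w ≤ B := by
    rintro m ⟨hanti, hsupp, hdiv, f, hf⟩ v0 w0
    by_cases hadj : G.Adj v0 w0
    · by_cases hm0 : m v0 w0 ≤ 0
      · exact hm0.trans hB0
      push_neg at hm0
      have hmcast : (0:ℝ) < (m v0 w0 : ℝ) := by exact_mod_cast hm0
      have hflt : f v0 < f w0 := by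
        have h1 := hf v0 w0 hadj
        have h2 := hpos v0 w0 hadj
        nlinarith
      set S : Finset V := Finset.univ.filter (fun v => f v < f w0) with hSdef
      set T : Finset V := Finset.univ.filter (fun v => ¬ f v < f w0) with hTdef
      have hv0S : v0 ∈ S := by simp [hSdef, hflt]
      have hw0T : w0 ∈ T := by simp [hTdef]
      -- cross terms are nonneg
      have hcross : ∀ v ∈ S, ∀ w ∈ T, 0 ≤ m v w := by
        intro v hv w hw
        by_cases ha : G.Adj v w
        · have hfv : f v < f w0 := by simpa [hSdef] using hv
          have hfw : f w0 ≤ f w := by simpa [hTdef, not_lt] using hw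
          have h1 := hf v w ha
          have h2 := hpos v w ha
          have : (0:ℝ) < (m v w : ℝ) * δ v w := by linarith
          have : (0:ℝ) < (m v w : ℝ) := by nlinarith
          exact le_of_lt (by exact_mod_cast this)
        · rw [hsupp v w ha]
      -- d v = sum over all w of m v w
      have hdall : ∀ v : V, ∑ w, m v w = d v := by
        intro v
        rw [← hdiv v]
        refine (Finset.sum_subset (Finset.subset_univ _) ?_).symm
        intro w _ hw
        exact hsupp v w (by simpa using hw)
      -- the inner S×S part vanishes by antisymmetry
      have hA : ∑ v ∈ S, ∑ w ∈ S, m v w = 0 := by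
        have h1 : ∑ v ∈ S, ∑ w ∈ S, m v w = ∑ v ∈ S, ∑ w ∈ S, -(m w v) :=
          Finset.sum_congr rfl fun v _ => Finset.sum_congr rfl fun w _ => hanti v w
        have h2 : ∑ v ∈ S, ∑ w ∈ S, -(m w v) = -∑ v ∈ S, ∑ w ∈ S, m v w := by
          rw [Finset.sum_comm]
          simp [Finset.sum_neg_distrib]
        omega
      -- sum of d over S equals the crossing sum
      have hcut : ∑ v ∈ S, d v = ∑ v ∈ S, ∑ w ∈ T, m v w := by
        calc ∑ v ∈ S, d v = ∑ v ∈ S, ∑ w, m v w :=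
              Finset.sum_congr rfl fun v _ => (hdall v).symm
          _ = ∑ v ∈ S, ((∑ w ∈ S, m v w) + ∑ w ∈ T, m v w) :=
              Finset.sum_congr rfl fun v _ => by
                rw [hSdef, hTdef]
                exact (Finset.sum_filter_add_sum_filter_not _ _ _).symm
          _ = (∑ v ∈ S, ∑ w ∈ S, m v w) + ∑ v ∈ S, ∑ w ∈ T, m v w :=
              Finset.sum_add_distrib
          _ = ∑ v ∈ S, ∑ w ∈ T, m v w := by rw [hA, zero_add]
      -- single term bounded by the crossing sum
      have hsingle : m v0 w0 ≤ ∑ v ∈ S, ∑ w ∈ T, m v w := by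
        calc m v0 w0 ≤ ∑ w ∈ T, m v0 w :=
              Finset.single_le_sum (fun w hw => hcross v0 hv0S w hw) hw0T
          _ ≤ ∑ v ∈ S, ∑ w ∈ T, m v w :=
              Finset.single_le_sum
                (fun v hv => Finset.sum_nonneg fun w hw => hcross v hv w hw) hv0S
      have hfinal : ∑ v ∈ S, d v ≤ B := by
        calc ∑ v ∈ S, d v ≤ ∑ v ∈ S, |d v| :=
              Finset.sum_le_sum fun v _ => le_abs_self _
          _ ≤ ∑ v, |d v| :=
              Finset.sum_le_sum_of_subset_of_nonneg (Finset.subset_univ _)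
                (fun v _ _ => abs_nonneg _)
      omega
    · rw [hsupp v0 w0 hadj]; exact hB0
  -- conclude finiteness
  refine Set.Finite.subset
    (Set.Finite.pi (fun v : V => Set.Finite.pi (fun w : V => Set.finite_Icc (-B) B))) ?_
  intro m hm
  have hub := key m hm
  obtain ⟨hanti, -, -, -⟩ := hm
  intro v _
  intro w _
  refine Set.mem_Icc.mpr ⟨?_, hub v w⟩
  have h1 := hub w v
  have h2 := hanti v w
  linarith
end

section
/- Let G be a finite tree (a finite connected acyclic simple graph) on a nonempty finite vertex set V with positive real edge lengths δ, and let d : V → ℤ satisfy ∑_{v ∈ V} d(v) = 0. Then there exists a function f : V → ℝ, unique up to adding a constant, such that for every edge {v,w} the slope (f(w) − f(v))/δ(v,w) is an integer, and for every vertex v, ∑_{w adjacent to v} (f(w) − f(v))/δ(v,w) = d(v). -/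
open Finset SimpleGraph

private lemma exists_adj_mem_tail {V : Type*} {G : SimpleGraph V} {x a : V} :
    ∀ (w : G.Walk x a), x ≠ a → ∃ u, G.Adj x u ∧ u ∈ w.support.tail
  | SimpleGraph.Walk.nil, h => absurd rfl h
  | SimpleGraph.Walk.cons h' w', _ => ⟨_, h', by simp⟩

private lemma two_le_degree_of_internal {V : Type*} [Fintype V] [DecidableEq V]
    {G : SimpleGraph V} [DecidableRel G.Adj] {a b x : V} (p : G.Walk a b)
    (hp : p.IsPath) (hx : x ∈ p.support) (hxa : x ≠ a) (hxb : x ≠ b) :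
    2 ≤ G.degree x := by
  obtain ⟨q, r, hsupp⟩ : ∃ (q : G.Walk a x) (r : G.Walk x b),
      p.support = q.support ++ r.support.tail :=
    ⟨p.takeUntil x hx, p.dropUntil x hx, by
      rw [← SimpleGraph.Walk.support_append, p.take_spec hx]⟩
  have hnd := hp.support_nodup
  rw [hsupp] at hnd
  obtain ⟨u1, hu1, hu1m⟩ := exists_adj_mem_tail q.reverse hxa
  obtain ⟨u2, hu2, hu2m⟩ := exists_adj_mem_tail r hxb
  have hu1q : u1 ∈ q.support := by
    have := List.mem_of_mem_tail hu1m
    rwa [SimpleGraph.Walk.support_reverse, List.mem_reverse] at this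
  have hdisj := (List.nodup_append'.mp hnd).2.2
  have hne : u1 ≠ u2 := fun h => hdisj hu1q (h ▸ hu2m)
  rw [← SimpleGraph.card_neighborFinset_eq_degree]
  exact Finset.one_lt_card.mpr ⟨u1, (SimpleGraph.mem_neighborFinset G x u1).mpr hu1,
    u2, (SimpleGraph.mem_neighborFinset G x u2).mpr hu2, hne⟩

private lemma exists_leaf {V : Type*} [Fintype V] [DecidableEq V]
    (G : SimpleGraph V) [DecidableRel G.Adj] (hconn : G.Connected) (hacyc : G.IsAcyclic)
    (hcard : 2 ≤ Fintype.card V) : ∃ x, G.degree x = 1 := by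
  classical
  have htree : G.IsTree := ⟨hconn, hacyc⟩
  have hdeg1 : ∀ v : V, 1 ≤ G.degree v := by
    intro v
    obtain ⟨w, hw⟩ := Fintype.exists_ne_of_one_lt_card hcard v
    obtain ⟨p⟩ := hconn.preconnected v w
    obtain ⟨u, hu, -⟩ := exists_adj_mem_tail p (Ne.symm hw)
    rw [← SimpleGraph.card_neighborFinset_eq_degree]
    exact Finset.card_pos.mpr ⟨u, (SimpleGraph.mem_neighborFinset G v u).mpr hu⟩
  by_contra hno
  push_neg at hno
  have hdeg2 : ∀ v : V, 2 ≤ G.degree v := fun v => by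
    have h1 := hdeg1 v; have h2 := hno v; omega
  have hsum := SimpleGraph.sum_degrees_eq_twice_card_edges G
  have hedges := htree.card_edgeFinset
  have hle : 2 * Fintype.card V ≤ ∑ v, G.degree v := by
    calc 2 * Fintype.card V = ∑ _v : V, 2 := by
          simp [Finset.sum_const, Finset.card_univ, mul_comm]
      _ ≤ ∑ v, G.degree v := Finset.sum_le_sum fun v _ => hdeg2 v
  omega

private lemma constant_of_divergence_zero {V : Type*} [Fintype V] [Nonempty V] [DecidableEq V]
    (G : SimpleGraph V) [DecidableRel G.Adj] (hconn : G.Connected)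
    (δ : V → V → ℝ) (hpos : ∀ v w, G.Adj v w → 0 < δ v w)
    (h : V → ℝ) (hdiv : ∀ v, ∑ w ∈ G.neighborFinset v, (h w - h v) / δ v w = 0) :
    ∀ v w : V, h v = h w := by
  obtain ⟨v0, -, hv0⟩ := Finset.exists_max_image Finset.univ h Finset.univ_nonempty
  suffices hall : ∀ v, h v = h v0 by intro v w; rw [hall v, hall w]
  have step : ∀ a, h a = h v0 → ∀ b, G.Adj a b → h b = h v0 := by
    intro a ha b hab
    have hnonpos : ∀ w ∈ G.neighborFinset a, (h w - h a) / δ a w ≤ 0 := by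
      intro w hw
      rw [SimpleGraph.mem_neighborFinset] at hw
      exact div_nonpos_of_nonpos_of_nonneg
        (sub_nonpos.mpr (ha ▸ hv0 w (Finset.mem_univ w))) (le_of_lt (hpos a w hw))
    have hzero := (Finset.sum_eq_zero_iff_of_nonpos hnonpos).mp (hdiv a) b
      ((SimpleGraph.mem_neighborFinset G a b).mpr hab)
    have hδ : δ a b ≠ 0 := ne_of_gt (hpos a b hab)
    rcases div_eq_zero_iff.mp hzero with h' | h'
    · have : h b = h a := by linarith [sub_eq_zero.mp h']
      rw [this, ha]
    · exact absurd h' hδ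
  have walkstep : ∀ (a b : V) (_ : G.Walk a b), h a = h v0 → h b = h v0 := by
    intro a b p
    induction p with
    | nil => exact id
    | cons hadj p ih => intro ha; exact ih (step _ ha _ hadj)
  intro v
  obtain ⟨p⟩ := hconn.preconnected v0 v
  exact walkstep v0 v p rfl

private lemma reachable_comap {V : Type*} {G : SimpleGraph V} {x : V} :
    ∀ {a b : V} (p : G.Walk a b), x ∉ p.support → ∀ (ha : a ≠ x) (hb : b ≠ x),
      (G.comap (Subtype.val : {v : V // v ≠ x} → V)).Reachable ⟨a, ha⟩ ⟨b, hb⟩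
  | a, _, SimpleGraph.Walk.nil, _, ha, hb => SimpleGraph.Reachable.refl _
  | a, b, @SimpleGraph.Walk.cons _ _ _ c _ hadj p, hx, ha, hb => by
    rw [SimpleGraph.Walk.support_cons, List.mem_cons] at hx
    push_neg at hx
    have hc : c ≠ x := fun h => hx.2 (h ▸ p.start_mem_support)
    have hstep : (G.comap (Subtype.val : {v : V // v ≠ x} → V)).Adj ⟨a, ha⟩ ⟨c, hc⟩ := hadj
    exact hstep.reachable.trans (reachable_comap p hx.2 hc hb)

universe u

private lemma exists_pwl : ∀ (n : ℕ) (V : Type u) [Fintype V] [DecidableEq V]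
    (G : SimpleGraph V) [DecidableRel G.Adj], Fintype.card V ≤ n → G.Connected → G.IsAcyclic →
    ∀ (δ : V → V → ℝ), (∀ v w, G.Adj v w → δ v w = δ w v) → (∀ v w, G.Adj v w → 0 < δ v w) →
    ∀ (d : V → ℤ), ∑ v : V, d v = 0 →
    ∃ f : V → ℝ,
      (∀ v w, G.Adj v w → ∃ m : ℤ, (f w - f v) / δ v w = (m : ℝ)) ∧
      (∀ v : V, ∑ w ∈ G.neighborFinset v, (f w - f v) / δ v w = (d v : ℝ)) := by
  intro n
  induction n with
  | zero =>
    intro V _ _ G _ hcard hconn _ _ _ _ _ _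
    have : Nonempty V := hconn.nonempty
    have : 0 < Fintype.card V := Fintype.card_pos
    omega
  | succ n ih =>
    intro V _ _ G _ hcard hconn hacyc δ hsymm hpos d hd
    classical
    rcases le_or_gt (Fintype.card V) 1 with h1 | h2
    · -- single vertex
      have hsub : ∀ v w : V, v = w := fun v w =>
        Fintype.card_le_one_iff.mp h1 v w
      have hnonempty : Nonempty V := hconn.nonempty
      obtain ⟨v₀⟩ := hnonempty
      have hnoadj : ∀ v w : V, ¬ G.Adj v w := fun v w hadj =>
        G.ne_of_adj hadj (hsub v w)
      refine ⟨0, fun v w hadj => absurd hadj (hnoadj v w), fun v => ?_⟩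
      have hnbr : G.neighborFinset v = ∅ := by
        ext w; simp only [SimpleGraph.mem_neighborFinset, Finset.notMem_empty, iff_false]
        exact hnoadj v w
      have huniv : (Finset.univ : Finset V) = {v} := by
        ext w; simp [hsub w v]
      have hdv : d v = 0 := by rwa [huniv, Finset.sum_singleton] at hd
      rw [hnbr, hdv]
      simp
    · -- at least two vertices: find a leaf x
      obtain ⟨x, hxdeg⟩ := exists_leaf G hconn hacyc h2
      have hcard1 : (G.neighborFinset x).card = 1 := by
        rwa [SimpleGraph.card_neighborFinset_eq_degree]
      obtain ⟨y, hy⟩ := Finset.card_eq_one.mp hcard1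
      have hxy : G.Adj x y :=
        (SimpleGraph.mem_neighborFinset G x y).mp (hy ▸ Finset.mem_singleton_self y)
      have hxney : x ≠ y := G.ne_of_adj hxy
      have hnbrx : ∀ w, G.Adj x w → w = y := fun w hw => by
        have := (SimpleGraph.mem_neighborFinset G x w).mpr hw
        rw [hy, Finset.mem_singleton] at this
        exact this
      set V' := {v : V // v ≠ x} with hV'
      haveI : DecidableEq V' := Subtype.instDecidableEq
      set G' := G.comap (Subtype.val : V' → V) with hG'
      haveI : DecidableRel G'.Adj := fun a b =>
        decidable_of_iff (G.Adj a.val b.val) (by simp only [hG', SimpleGraph.comap_adj])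
      have hadj' : ∀ a b : V', (G'.Adj a b ↔ G.Adj ↑a ↑b) := fun a b => Iff.rfl
      have hy' : (y : V) ≠ x := Ne.symm hxney
      let y'' : V' := ⟨y, hy'⟩
      -- cardinality
      have hcard' : Fintype.card V' < Fintype.card V :=
        Fintype.card_subtype_lt (p := fun v : V => v ≠ x) (x := x) (by simp)
      have hcard'' : Fintype.card V' ≤ n := by omega
      -- connectivity of G'
      have hconn' : G'.Connected := by
        rw [SimpleGraph.connected_iff]
        refine ⟨?_, ⟨y''⟩⟩
        rintro ⟨a, ha⟩ ⟨b, hb⟩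
        obtain ⟨w⟩ := hconn.preconnected a b
        have hp : w.toPath.val.IsPath := w.toPath.property
        have hxnot : x ∉ w.toPath.val.support := by
          intro hmem
          have := two_le_degree_of_internal w.toPath.val hp hmem (Ne.symm ha) (Ne.symm hb)
          omega
        exact reachable_comap w.toPath.val hxnot ha hb
      -- acyclicity of G'
      have hacyc' : G'.IsAcyclic := by
        intro v' c' hc'
        let ι : G' →g G := ⟨Subtype.val, fun h => h⟩
        exact hacyc (c'.map ι) (hc'.map Subtype.val_injective)
      -- new divisor
      set d' : V' → ℤ := fun v => d ↑v + (if (v : V) = y then d x else 0) with hd'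
      have hsum_subtype : ∀ (g : V → ℤ),
          ∑ v' : V', g ↑v' = ∑ v ∈ Finset.univ.erase x, g v := fun g =>
        (Finset.sum_subtype (Finset.univ.erase x) (by simp) g).symm
      have hd'sum : ∑ v' : V', d' v' = 0 := by
        rw [hd']
        rw [Finset.sum_add_distrib, hsum_subtype (fun v => d v),
          hsum_subtype (fun v => if v = y then d x else 0)]
        have h1 : ∑ v ∈ Finset.univ.erase x, d v + d x = ∑ v : V, d v :=
          Finset.sum_erase_add Finset.univ d (Finset.mem_univ x)
        have h2 : ∑ v ∈ Finset.univ.erase x, (if v = y then d x else 0) = d x := by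
          rw [Finset.sum_ite_eq' (Finset.univ.erase x) y (fun _ => d x)]
          simp [hy']
        omega
      -- new lengths
      set δ' : V' → V' → ℝ := fun a b => δ ↑a ↑b with hδ'
      obtain ⟨f', hf'1, hf'2⟩ := ih V' G' hcard'' hconn' hacyc' δ'
        (fun a b hab => hsymm ↑a ↑b hab) (fun a b hab => hpos ↑a ↑b hab) d' hd'sum
      -- extend to V
      set f : V → ℝ := fun v =>
        if h : v = x then f' y'' - (d x : ℝ) * δ x y else f' ⟨v, h⟩ with hf
      have hfne : ∀ (v : V) (h : v ≠ x), f v = f' ⟨v, h⟩ := fun v h => dif_neg h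
      have hfx : f x = f' y'' - (d x : ℝ) * δ x y := dif_pos rfl
      have hfy : f y = f' y'' := hfne y hy'
      have hδxy : δ x y ≠ 0 := ne_of_gt (hpos x y hxy)
      have hslopexy : (f y - f x) / δ x y = (d x : ℝ) := by
        rw [hfy, hfx]
        field_simp
        ring
      -- reindexing lemma for sums over neighbors
      have hreindex : ∀ (v : V) (hv : v ≠ x) (F : V → ℝ),
          ∑ w' ∈ G'.neighborFinset ⟨v, hv⟩, F ↑w' = ∑ w ∈ (G.neighborFinset v).erase x, F w := by
        intro v hv F
        have himg : (G'.neighborFinset ⟨v, hv⟩).image (Subtype.val) =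
            (G.neighborFinset v).erase x := by
          ext w
          simp only [Finset.mem_image, SimpleGraph.mem_neighborFinset, Finset.mem_erase]
          constructor
          · rintro ⟨w', hw', rfl⟩; exact ⟨w'.2, hw'⟩
          · rintro ⟨hwx, hadj⟩; exact ⟨⟨w, hwx⟩, hadj, rfl⟩
        rw [← himg, Finset.sum_image (fun a _ b _ h => Subtype.val_injective h)]
      -- slopes are integers
      refine ⟨f, ?_, ?_⟩
      · intro v w hadj
        by_cases hv : v = x
        · have hw : w = y := hnbrx w (hv ▸ hadj)
          exact ⟨d x, by rw [hv, hw]; exact hslopexy⟩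
        · by_cases hw : w = x
          · have hv' : v = y := hnbrx v (hw ▸ hadj).symm
            refine ⟨-(d x), ?_⟩
            rw [hv', hw, hsymm y x (hxy.symm)]
            push_cast
            rw [← hslopexy]
            ring
          · obtain ⟨m, hm⟩ := hf'1 ⟨v, hv⟩ ⟨w, hw⟩ hadj
            refine ⟨m, ?_⟩
            rw [hfne v hv, hfne w hw]
            exact hm
      · intro v
        by_cases hv : v = x
        · rw [hv, hy, Finset.sum_singleton, hslopexy]
        · -- v ≠ x
          have hsum' := hf'2 ⟨v, hv⟩
          have hsummand : ∀ w' ∈ G'.neighborFinset ⟨v, hv⟩,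
              (f' w' - f' ⟨v, hv⟩) / δ' ⟨v, hv⟩ w' = (f ↑w' - f v) / δ v ↑w' := by
            intro w' _
            rw [hfne ↑w' w'.2, hfne v hv, Subtype.coe_eta]
          rw [Finset.sum_congr rfl hsummand] at hsum'
          rw [hreindex v hv (fun w => (f w - f v) / δ v w)] at hsum'
          by_cases hvy : v = y
          · have hxmem : x ∈ G.neighborFinset v :=
              (SimpleGraph.mem_neighborFinset G v x).mpr (hvy ▸ hxy.symm)
            have hsplit := Finset.add_sum_erase (G.neighborFinset v)
              (fun w => (f w - f v) / δ v w) hxmem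
            have htermx : (f x - f v) / δ v x = -(d x : ℝ) := by
              rw [hvy, hsymm y x hxy.symm]
              push_cast
              rw [← hslopexy]
              ring
            have hd'val : ((d' ⟨v, hv⟩ : ℤ) : ℝ) = (d v : ℝ) + (d x : ℝ) := by
              simp [hd', hvy]
            rw [← hsplit]
            beta_reduce
            rw [htermx, hsum', hd'val]
            ring
          · -- x not a neighbor of v
            have hxnot : x ∉ G.neighborFinset v := by
              rw [SimpleGraph.mem_neighborFinset]
              intro hadj
              exact hvy (hnbrx v hadj.symm)
            rw [Finset.erase_eq_of_notMem hxnot] at hsum'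
            have hd'v : (d' ⟨v, hv⟩ : ℝ) = (d v : ℝ) := by
              simp [hd', hvy]
            rw [hsum', hd'v]

/-- On a finite tree (connected acyclic simple graph) with positive symmetric edge lengths `δ`,
given a divisor `d : V → ℤ` of total degree zero, there exists a function `f : V → ℝ`, unique
up to an additive constant, with integer slopes along all edges and with sum of outgoing slopes
at each vertex `v` equal to `d v`. -/
theorem tree_pwl_function_with_prescribed_divisor
    {V : Type*} [Fintype V] [Nonempty V] [DecidableEq V]
    (G : SimpleGraph V) [DecidableRel G.Adj]
    (hconn : G.Connected) (hacyc : G.IsAcyclic)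
    (δ : V → V → ℝ)
    (hsymm : ∀ v w, G.Adj v w → δ v w = δ w v)
    (hpos : ∀ v w, G.Adj v w → 0 < δ v w)
    (d : V → ℤ) (hd : ∑ v : V, d v = 0) :
    (∃ f : V → ℝ,
      (∀ v w, G.Adj v w → ∃ n : ℤ, (f w - f v) / δ v w = (n : ℝ)) ∧
      (∀ v : V, ∑ w ∈ G.neighborFinset v, (f w - f v) / δ v w = (d v : ℝ))) ∧
    (∀ f g : V → ℝ,
      ((∀ v w, G.Adj v w → ∃ n : ℤ, (f w - f v) / δ v w = (n : ℝ)) ∧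
        (∀ v : V, ∑ w ∈ G.neighborFinset v, (f w - f v) / δ v w = (d v : ℝ))) →
      ((∀ v w, G.Adj v w → ∃ n : ℤ, (g w - g v) / δ v w = (n : ℝ)) ∧
        (∀ v : V, ∑ w ∈ G.neighborFinset v, (g w - g v) / δ v w = (d v : ℝ))) →
      ∃ c : ℝ, ∀ v : V, f v = g v + c) := by
  constructor
  · exact exists_pwl (Fintype.card V) V G le_rfl hconn hacyc δ hsymm hpos d hd
  · rintro f g ⟨-, hf2⟩ ⟨-, hg2⟩
    have hdiv : ∀ v, ∑ w ∈ G.neighborFinset v,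
        ((fun u => f u - g u) w - (fun u => f u - g u) v) / δ v w = 0 := by
      intro v
      have : ∀ w ∈ G.neighborFinset v,
          ((f w - g w) - (f v - g v)) / δ v w
            = (f w - f v) / δ v w - (g w - g v) / δ v w := by
        intro w _
        rw [div_sub_div_same]
        ring_nf
      rw [Finset.sum_congr rfl this, Finset.sum_sub_distrib, hf2 v, hg2 v, sub_self]
    have hconst := constant_of_divergence_zero G hconn δ hpos (fun u => f u - g u) hdiv
    obtain ⟨v0⟩ := ‹Nonempty V›
    refine ⟨f v0 - g v0, fun v => ?_⟩
    have := hconst v v0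
    linarith
end

section
/- Let k be a field and let R = k[x,y] be the polynomial ring in two variables, regarded as an algebra over A = k[t] via the k-algebra homomorphism sending t to xy. Then the R-module Der_A(R, R) of A-linear derivations of R is free of rank one, generated by the derivation E determined by E(x) = x and E(y) = −y. Equivalently, the R-linear map Der_A(R,R) → R sending D to D(x) is injective and its image is the principal ideal (x). -/
/-- `R = k[x,y]` regarded as an algebra over `A = k[t]` via `t ↦ xy`:
the local model of a one-parameter smoothing of a node. -/
noncomputable instance smoothingAlgebra (k : Type*) [Field k] :
    Algebra (Polynomial k) (MvPolynomial (Fin 2) k) :=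
  (Polynomial.aeval (MvPolynomial.X 0 * MvPolynomial.X 1 :
      MvPolynomial (Fin 2) k)).toRingHom.toAlgebra

namespace SmoothingAux

open MvPolynomial

variable (k : Type*) [Field k]

/-- The Euler-type derivation `E = x ∂/∂x - y ∂/∂y` as a `k`-derivation. -/
noncomputable def Ek : Derivation k (MvPolynomial (Fin 2) k) (MvPolynomial (Fin 2) k) :=
  (X 0 : MvPolynomial (Fin 2) k) • (pderiv 0 : Derivation k (MvPolynomial (Fin 2) k) _) -
    (X 1 : MvPolynomial (Fin 2) k) • (pderiv 1 : Derivation k (MvPolynomial (Fin 2) k) _)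

lemma Ek_X0 : Ek k (X 0) = X 0 := by
  simp [Ek, pderiv_X_self, pderiv_X_of_ne (show (0 : Fin 2) ≠ 1 by decide)]

lemma Ek_X1 : Ek k (X 1) = -(X 1) := by
  simp [Ek, pderiv_X_self, pderiv_X_of_ne (show (1 : Fin 2) ≠ 0 by decide)]

lemma Ek_xy : Ek k (X 0 * X 1) = 0 := by
  rw [Derivation.leibniz, Ek_X0, Ek_X1]
  ring_nf

lemma deriv_aeval_eq_zero {R : Type*} [CommRing R] [Algebra k R]
    (D : Derivation k R R) (c : R) (hc : D c = 0) (p : Polynomial k) :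
    D (Polynomial.aeval c p) = 0 := by
  induction p using Polynomial.induction_on with
  | C a => simp
  | add p q hp hq => simp [hp, hq]
  | monomial n a h =>
    simp only [map_mul, map_pow, Polynomial.aeval_C, Polynomial.aeval_X]
    rw [Derivation.leibniz, Derivation.leibniz_pow]
    simp [hc, Derivation.map_algebraMap]

lemma algebraMap_eq (p : Polynomial k) :
    algebraMap (Polynomial k) (MvPolynomial (Fin 2) k) p =
      Polynomial.aeval (X 0 * X 1 : MvPolynomial (Fin 2) k) p := rfl

instance : IsScalarTower k (Polynomial k) (MvPolynomial (Fin 2) k) :=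
  IsScalarTower.of_algebraMap_eq fun a => by
    rw [show algebraMap k (Polynomial k) a = Polynomial.C a from rfl, algebraMap_eq,
      Polynomial.aeval_C]

lemma Ek_algebraMap (p : Polynomial k) :
    Ek k (algebraMap (Polynomial k) (MvPolynomial (Fin 2) k) p) = 0 := by
  rw [algebraMap_eq]
  exact deriv_aeval_eq_zero k (Ek k) _ (Ek_xy k) p

/-- The Euler derivation as a derivation over `A = k[t]`. -/
noncomputable def Esm :
    Derivation (Polynomial k) (MvPolynomial (Fin 2) k) (MvPolynomial (Fin 2) k) where
  toFun := Ek k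
  map_add' := map_add _
  map_smul' := fun p m => by
    simp only [RingHom.id_apply]
    rw [Algebra.smul_def, Derivation.leibniz, Ek_algebraMap, smul_zero, add_zero,
      smul_eq_mul, ← Algebra.smul_def]
  map_one_eq_zero' := (Ek k).map_one_eq_zero
  leibniz' := (Ek k).leibniz

@[simp] lemma Esm_apply (m : MvPolynomial (Fin 2) k) : Esm k m = Ek k m := rfl

lemma prime_X0 : Prime (X 0 : MvPolynomial (Fin 2) k) := by
  rw [← MulEquiv.prime_iff (finSuccEquiv k 1).toRingEquiv.toMulEquiv]
  have : (finSuccEquiv k 1).toRingEquiv.toMulEquiv (X 0) = Polynomial.X :=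
    finSuccEquiv_X_zero
  rw [this]
  exact Polynomial.prime_X

lemma D_xy_eq_zero (D : Derivation (Polynomial k) (MvPolynomial (Fin 2) k)
    (MvPolynomial (Fin 2) k)) : D (X 0 * X 1) = 0 := by
  have : (X 0 * X 1 : MvPolynomial (Fin 2) k) =
      algebraMap (Polynomial k) (MvPolynomial (Fin 2) k) Polynomial.X := by
    rw [algebraMap_eq, Polynomial.aeval_X]
  rw [this, Derivation.map_algebraMap]

lemma exists_rep (D : Derivation (Polynomial k) (MvPolynomial (Fin 2) k)
    (MvPolynomial (Fin 2) k)) :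
    ∃ r : MvPolynomial (Fin 2) k, D (X 0) = X 0 * r ∧ D (X 1) = -(X 1 * r) := by
  have h := D_xy_eq_zero k D
  rw [Derivation.leibniz, smul_eq_mul, smul_eq_mul] at h
  -- X 0 * D (X 1) + X 1 * D (X 0) = 0
  have hdvd : (X 0 : MvPolynomial (Fin 2) k) ∣ X 1 * D (X 0) := by
    refine ⟨-(D (X 1)), ?_⟩
    linear_combination h
  rcases (prime_X0 k).2.2 _ _ hdvd with h01 | hx
  · exact absurd (X_dvd_X.mp h01) (by decide)
  · obtain ⟨r, hr⟩ := hx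
    refine ⟨r, hr, ?_⟩
    have hx0 : (X 0 : MvPolynomial (Fin 2) k) ≠ 0 := X_ne_zero 0
    apply mul_left_cancel₀ hx0
    rw [hr] at h
    linear_combination h

lemma eq_smul_Esm (D : Derivation (Polynomial k) (MvPolynomial (Fin 2) k)
    (MvPolynomial (Fin 2) k)) (r : MvPolynomial (Fin 2) k)
    (h0 : D (X 0) = X 0 * r) (h1 : D (X 1) = -(X 1 * r)) : D = r • Esm k := by
  have key : (D.restrictScalars k) = ((r • Esm k).restrictScalars k) := by
    apply derivation_ext
    intro i
    fin_cases i <;>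
      simp [Derivation.restrictScalars_apply, h0, h1, Derivation.smul_apply, Ek_X0, Ek_X1,
        mul_comm]
  exact Derivation.ext fun a => congrFun (congrArg DFunLike.coe key) a

end SmoothingAux

/-- For `R = k[x,y]` over `A = k[t]` with `t ↦ xy`, the module `Der_A(R,R)` of `A`-linear
derivations is free of rank one, generated by the derivation `E` with `E x = x`, `E y = -y`.
Equivalently, the map `Der_A(R,R) → R`, `D ↦ D x`, is injective with image the principal
ideal `(x)`. -/
theorem smoothing_log_tangent_free_of_rank_one (k : Type*) [Field k] :
    (∃ E : Derivation (Polynomial k) (MvPolynomial (Fin 2) k) (MvPolynomial (Fin 2) k),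
      E (MvPolynomial.X 0) = MvPolynomial.X 0 ∧
      E (MvPolynomial.X 1) = - MvPolynomial.X 1 ∧
      ∀ D : Derivation (Polynomial k) (MvPolynomial (Fin 2) k) (MvPolynomial (Fin 2) k),
        ∃! r : MvPolynomial (Fin 2) k, D = r • E) ∧
    Function.Injective
      (fun D : Derivation (Polynomial k) (MvPolynomial (Fin 2) k) (MvPolynomial (Fin 2) k) =>
        D (MvPolynomial.X 0)) ∧
    Set.range
      (fun D : Derivation (Polynomial k) (MvPolynomial (Fin 2) k) (MvPolynomial (Fin 2) k) =>
        D (MvPolynomial.X 0)) =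
      (Ideal.span {(MvPolynomial.X 0 : MvPolynomial (Fin 2) k)} :
        Ideal (MvPolynomial (Fin 2) k)) := by
  classical
  open MvPolynomial SmoothingAux in
  have hE0 : Esm k (X 0) = X 0 := Ek_X0 k
  have hE1 : Esm k (X 1) = -(X 1) := Ek_X1 k
  have hx0 : (X 0 : MvPolynomial (Fin 2) k) ≠ 0 := MvPolynomial.X_ne_zero 0
  refine ⟨⟨SmoothingAux.Esm k, hE0, by simpa using hE1, fun D => ?_⟩, ?_, ?_⟩
  · obtain ⟨r, h0, h1⟩ := SmoothingAux.exists_rep k D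
    refine ⟨r, SmoothingAux.eq_smul_Esm k D r h0 h1, fun s hs => ?_⟩
    have : D (X 0) = s * X 0 := by
      rw [hs]; simp [Derivation.smul_apply, hE0]
    have h' : s * X 0 = r * X 0 := by rw [← this, h0]; ring
    exact mul_right_cancel₀ hx0 h'
  · intro D1 D2 h
    simp only at h
    obtain ⟨r1, h10, h11⟩ := SmoothingAux.exists_rep k D1
    obtain ⟨r2, h20, h21⟩ := SmoothingAux.exists_rep k D2
    have : r1 = r2 := by
      apply mul_left_cancel₀ hx0
      rw [← h10, ← h20, h]
    rw [SmoothingAux.eq_smul_Esm k D1 r1 h10 h11,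
      SmoothingAux.eq_smul_Esm k D2 r2 h20 h21, this]
  · ext p
    simp only [Set.mem_range, SetLike.mem_coe, Ideal.mem_span_singleton]
    constructor
    · rintro ⟨D, rfl⟩
      obtain ⟨r, h0, _⟩ := SmoothingAux.exists_rep k D
      exact ⟨r, h0⟩
    · rintro ⟨r, rfl⟩
      refine ⟨r • SmoothingAux.Esm k, ?_⟩
      simp [Derivation.smul_apply, hE0, mul_comm]
end
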